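/- Let Q = ⟨a, x, y | a⁻¹xa = y, a⁻¹ya = x⟩ and let n be an odd positive integer. Then the quotient Q/⟪aⁿ⟫ of Q by the normal closure of aⁿ is isomorphic to ℤ/nℤ × ℤ. In particular, Q/⟪aⁿ⟫ is abelian. -/

import Mathlib

/-- Relators of `Q = ⟨a, x, y | a⁻¹xa = y, a⁻¹ya = x⟩`, with `a, x, y` the generators
indexed by `0, 1, 2`. -/
def rels13 : Set (FreeGroup (Fin 3)) :=
  {(FreeGroup.of 0)⁻¹ * FreeGroup.of 1 * FreeGroup.of 0 * (FreeGroup.of 2)⁻¹,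
   (FreeGroup.of 0)⁻¹ * FreeGroup.of 2 * FreeGroup.of 0 * (FreeGroup.of 1)⁻¹}

namespace Stmt13Aux

abbrev G13 := PresentedGroup rels13

abbrev N13 (n : ℕ) : Subgroup G13 :=
  Subgroup.normalClosure ({(PresentedGroup.of 0 : G13) ^ n} : Set G13)

abbrev Q13 (n : ℕ) := G13 ⧸ N13 n

def gen (n : ℕ) (i : Fin 3) : Q13 n := QuotientGroup.mk (PresentedGroup.of i)

lemma grel1 : (PresentedGroup.of 0 : G13)⁻¹ * PresentedGroup.of 1 * PresentedGroup.of 0 =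
    PresentedGroup.of 2 := by
  have h : ((FreeGroup.of 0)⁻¹ * FreeGroup.of 1 * FreeGroup.of 0 * (FreeGroup.of 2)⁻¹ :
      FreeGroup (Fin 3)) ∈ rels13 := Or.inl rfl
  have h2 : (PresentedGroup.mk rels13)
      ((FreeGroup.of 0)⁻¹ * FreeGroup.of 1 * FreeGroup.of 0 * (FreeGroup.of 2)⁻¹) = 1 :=
    (QuotientGroup.eq_one_iff _).mpr (Subgroup.subset_normalClosure h)
  simp only [map_mul, map_inv, mul_inv_eq_one] at h2
  exact h2

lemma grel2 : (PresentedGroup.of 0 : G13)⁻¹ * PresentedGroup.of 2 * PresentedGroup.of 0 =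
    PresentedGroup.of 1 := by
  have h : ((FreeGroup.of 0)⁻¹ * FreeGroup.of 2 * FreeGroup.of 0 * (FreeGroup.of 1)⁻¹ :
      FreeGroup (Fin 3)) ∈ rels13 := Or.inr rfl
  have h2 : (PresentedGroup.mk rels13)
      ((FreeGroup.of 0)⁻¹ * FreeGroup.of 2 * FreeGroup.of 0 * (FreeGroup.of 1)⁻¹) = 1 :=
    (QuotientGroup.eq_one_iff _).mpr (Subgroup.subset_normalClosure h)
  simp only [map_mul, map_inv, mul_inv_eq_one] at h2
  exact h2

lemma qrel1 (n : ℕ) : (gen n 0)⁻¹ * gen n 1 * gen n 0 = gen n 2 := by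
  have := congrArg (QuotientGroup.mk' (N13 n)) grel1
  simpa [gen] using this

lemma qrel2 (n : ℕ) : (gen n 0)⁻¹ * gen n 2 * gen n 0 = gen n 1 := by
  have := congrArg (QuotientGroup.mk' (N13 n)) grel2
  simpa [gen] using this

lemma qan (n : ℕ) : (gen n 0) ^ n = 1 := by
  show (QuotientGroup.mk (PresentedGroup.of 0 : G13) : Q13 n) ^ n = 1
  rw [← QuotientGroup.mk_pow, QuotientGroup.eq_one_iff]
  exact Subgroup.subset_normalClosure rfl

/-- `a * y = x * a` -/
lemma s1 (n : ℕ) : SemiconjBy (gen n 0) (gen n 2) (gen n 1) := by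
  have h := qrel1 n
  unfold SemiconjBy
  rw [← h]
  group

/-- `a * x = y * a` -/
lemma s2 (n : ℕ) : SemiconjBy (gen n 0) (gen n 1) (gen n 2) := by
  have h := qrel2 n
  unfold SemiconjBy
  rw [← h]
  group

lemma s_even (n k : ℕ) : SemiconjBy ((gen n 0) ^ (2 * k)) (gen n 1) (gen n 1) := by
  induction k with
  | zero => simpa using SemiconjBy.one_left (gen n 1)
  | succ k ih =>
      rw [Nat.mul_succ, pow_add]
      have h2 : SemiconjBy ((gen n 0) ^ 2) (gen n 1) (gen n 1) := by
        rw [sq]; exact (s1 n).mul_left (s2 n)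
      exact ih.mul_left h2

lemma s_n {n : ℕ} (hodd : Odd n) : SemiconjBy ((gen n 0) ^ n) (gen n 1) (gen n 2) := by
  obtain ⟨k, hk⟩ := hodd
  have h := (s2 n).mul_left (s_even n k)
  rw [← pow_succ', ← hk] at h
  exact h

lemma qxy {n : ℕ} (hodd : Odd n) : gen n 1 = gen n 2 := by
  have h := s_n hodd
  rw [qan n] at h
  simpa [SemiconjBy] using h

/-- `a * x = x * a` -/
lemma hax {n : ℕ} (hodd : Odd n) : Commute (gen n 0) (gen n 1) := by
  have h := s1 n
  rw [← qxy hodd] at h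
  exact h

lemma top_closure (n : ℕ) :
    Subgroup.closure (Set.range (gen n)) = ⊤ := by
  have h : gen n = (QuotientGroup.mk' (N13 n)) ∘ PresentedGroup.of := rfl
  rw [h, Set.range_comp, ← MonoidHom.map_closure, PresentedGroup.closure_range_of,
    ← MonoidHom.range_eq_map]
  exact MonoidHom.range_eq_top.2 (QuotientGroup.mk'_surjective _)

lemma gen_comm {n : ℕ} (hodd : Odd n) (i j : Fin 3) : Commute (gen n i) (gen n j) := by
  have hxy := qxy hodd
  have h01 := hax hodd
  have h02 : Commute (gen n 0) (gen n 2) := hxy ▸ h01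
  have h12 : Commute (gen n 1) (gen n 2) := hxy ▸ Commute.refl (gen n 1)
  have h22 : Commute (gen n 2) (gen n 2) := Commute.refl _
  fin_cases i <;> fin_cases j <;>
    first
      | exact Commute.refl _
      | exact h01
      | exact h01.symm
      | exact h02
      | exact h02.symm
      | exact h12
      | exact h12.symm

lemma qcomm {n : ℕ} (hodd : Odd n) : ∀ u v : Q13 n, u * v = v * u := by
  have hcent : ∀ i, gen n i ∈ Subgroup.center (Q13 n) := by
    intro i
    rw [Subgroup.mem_center_iff]
    intro g
    have hg : g ∈ Subgroup.closure (Set.range (gen n)) := by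
      rw [top_closure n]; trivial
    induction hg using Subgroup.closure_induction with
    | mem s hs => obtain ⟨j, rfl⟩ := hs; exact gen_comm hodd j i
    | one => simp
    | mul u v _ _ hu hv => rw [mul_assoc, hv, ← mul_assoc, hu, mul_assoc]
    | inv u _ hu => exact Commute.inv_left hu
  intro u v
  have hu : u ∈ Subgroup.center (Q13 n) := by
    have hg : u ∈ Subgroup.closure (Set.range (gen n)) := by
      rw [top_closure n]; trivial
    refine Subgroup.closure_le (Subgroup.center (Q13 n)) |>.mpr ?_ hg
    rintro _ ⟨i, rfl⟩
    exact hcent i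
  exact ((Subgroup.mem_center_iff.mp hu) v).symm

abbrev A13 (n : ℕ) := Multiplicative (ZMod n) × Multiplicative ℤ

def fgen (n : ℕ) : Fin 3 → A13 n :=
  ![(Multiplicative.ofAdd (1 : ZMod n), 1), (1, Multiplicative.ofAdd (1 : ℤ)),
    (1, Multiplicative.ofAdd (1 : ℤ))]

lemma fgen_rels (n : ℕ) : ∀ r ∈ rels13, FreeGroup.lift (fgen n) r = 1 := by
  intro r hr
  obtain rfl | rfl := hr <;>
    simp [fgen, Prod.ext_iff, mul_assoc]

def phi0 (n : ℕ) : G13 →* A13 n := PresentedGroup.toGroup (fgen_rels n)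

lemma phi0_gen (n : ℕ) (i : Fin 3) : phi0 n (PresentedGroup.of i) = fgen n i :=
  PresentedGroup.toGroup.of _

lemma hker (n : ℕ) : N13 n ≤ (phi0 n).ker := by
  refine Subgroup.normalClosure_le_normal ?_
  rintro g hg
  rw [Set.mem_singleton_iff] at hg; subst hg
  rw [SetLike.mem_coe, MonoidHom.mem_ker, map_pow, phi0_gen]
  have h1 : (Multiplicative.ofAdd (1 : ZMod n)) ^ n = 1 := by
    rw [← ofAdd_nsmul]
    simp
  simp [fgen, Prod.ext_iff, h1]

def phi (n : ℕ) : Q13 n →* A13 n :=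
  QuotientGroup.lift (N13 n) (phi0 n) (hker n)

lemma phi_gen (n : ℕ) (i : Fin 3) : phi n (gen n i) = fgen n i := by
  show phi n (QuotientGroup.mk (PresentedGroup.of i)) = fgen n i
  rw [phi, QuotientGroup.lift_mk, phi0_gen]

def psi2 (n : ℕ) : Multiplicative ℤ →* Q13 n := zpowersHom (Q13 n) (gen n 1)

def psi1 (n : ℕ) : Multiplicative (ZMod n) →* Q13 n :=
  (MulEquiv.multiplicativeAdditive (Q13 n)).toMonoidHom.comp
    (AddMonoidHom.toMultiplicative
      (ZMod.lift n ⟨zmultiplesHom (Additive (Q13 n)) (Additive.ofMul (gen n 0)), by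
        rw [zmultiplesHom_apply, ← ofMul_zpow, zpow_natCast, qan n, ofMul_one]⟩))

lemma psi1_intCast (n : ℕ) (m : ℤ) :
    psi1 n (Multiplicative.ofAdd ((m : ZMod n))) = gen n 0 ^ m := by
  simp [psi1, ZMod.lift_coe, zmultiplesHom_apply, MulEquiv.multiplicativeAdditive,
    ← ofMul_zpow]

def psiC (n : ℕ) (hc : ∀ u v : Q13 n, u * v = v * u) : A13 n →* Q13 n :=
  (psi1 n).noncommCoprod (psi2 n) (fun u v => show Commute (psi1 n u) (psi2 n v) from hc _ _)

end Stmt13Aux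

open Stmt13Aux in
/-- For `Q = ⟨a, x, y | a⁻¹xa = y, a⁻¹ya = x⟩` and odd `n > 0`, the quotient `Q/⟪aⁿ⟫`
is isomorphic to `ℤ/nℤ × ℤ`; in particular it is abelian. -/
theorem stmt13 (n : ℕ) (hodd : Odd n) (hpos : 0 < n) :
    Nonempty ((PresentedGroup rels13 ⧸ Subgroup.normalClosure
        ({(PresentedGroup.of 0 : PresentedGroup rels13) ^ n} :
          Set (PresentedGroup rels13))) ≃*
        Multiplicative (ZMod n) × Multiplicative ℤ) ∧
    ∀ u v : PresentedGroup rels13 ⧸ Subgroup.normalClosure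
        ({(PresentedGroup.of 0 : PresentedGroup rels13) ^ n} :
          Set (PresentedGroup rels13)), u * v = v * u := by
  have hc := qcomm hodd
  refine ⟨?_, hc⟩
  have hpsiC0 : psiC n hc (fgen n 0) = gen n 0 := by
    rw [psiC, MonoidHom.noncommCoprod_apply]
    have : (fgen n 0).1 = Multiplicative.ofAdd (((1 : ℤ) : ZMod n)) := by
      simp [fgen]
    show psi1 n (fgen n 0).1 * psi2 n (fgen n 0).2 = gen n 0
    rw [this, psi1_intCast, zpow_one]
    simp [fgen, psi2]
  have hpsiC1 : psiC n hc (fgen n 1) = gen n 1 := by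
    show psi1 n (fgen n 1).1 * psi2 n (fgen n 1).2 = gen n 1
    have : psi1 n (fgen n 1).1 = 1 := by simp [fgen]
    rw [this, one_mul]
    simp [fgen, psi2, zpowersHom_apply]
  have hpsiC2 : psiC n hc (fgen n 2) = gen n 2 := by
    have : fgen n 2 = fgen n 1 := by simp [fgen]
    rw [this, hpsiC1, qxy hodd]
  have hleft : (psiC n hc).comp (phi n) = MonoidHom.id (Q13 n) := by
    apply QuotientGroup.monoidHom_ext
    apply PresentedGroup.ext
    intro i
    simp only [MonoidHom.comp_apply, QuotientGroup.mk'_apply, MonoidHom.id_apply]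
    have hphi : phi n (QuotientGroup.mk (PresentedGroup.of i)) = fgen n i := phi_gen n i
    rw [hphi]
    fin_cases i
    · exact hpsiC0
    · exact hpsiC1
    · exact hpsiC2
  refine ⟨{ toFun := phi n, invFun := psiC n hc,
            left_inv := fun q => ?_, right_inv := fun p => ?_,
            map_mul' := map_mul (phi n) }⟩
  · exact DFunLike.congr_fun hleft q
  · obtain ⟨u, v⟩ := p
    obtain ⟨m, hm⟩ := ZMod.intCast_surjective (n := n) (Multiplicative.toAdd u)
    have hu : u = Multiplicative.ofAdd ((m : ZMod n)) := by rw [hm]; rfl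
    have hpsi : psiC n hc (u, v) = gen n 0 ^ m * gen n 1 ^ (Multiplicative.toAdd v) := by
      show psi1 n u * psi2 n v = _
      rw [hu, psi1_intCast]
      rfl
    rw [hpsi, map_mul, map_zpow, map_zpow, phi_gen, phi_gen]
    refine Prod.ext ?_ ?_
    · show (Multiplicative.ofAdd (1 : ZMod n)) ^ m * (1 : Multiplicative (ZMod n)) ^ (Multiplicative.toAdd v) = u
      rw [one_zpow, mul_one, ← ofAdd_zsmul, hu]
      congr 1
      simp [zsmul_eq_mul]
    · show ((1 : Multiplicative ℤ)) ^ m * (Multiplicative.ofAdd (1 : ℤ)) ^ (Multiplicative.toAdd v) = v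
      rw [one_zpow, one_mul, ← ofAdd_zsmul]
      simp
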